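/- arXiv:1606.08649 — 2 statements merged into one kernel-verified Lean document; each statement's English description precedes it below -/
import Mathlib

section
/- In a pointed finitely complete category, a point (f : A → B, s : B → A) is strong if and only if the pair (ker(f) : Ker(f) → A, s : B → A) is jointly strongly epimorphic. -/
open CategoryTheory CategoryTheory.Limits ZeroObject

universe v u

variable {C : Type u} [Category.{v} C]

/-- A cospan `(r, s)` is jointly strongly epimorphic: whenever both `r` and `s`
factor through a monomorphism `m`, the monomorphism `m` is an isomorphism. -/
def JointlyStronglyEpi {X Y A : C} (r : X ⟶ A) (s : Y ⟶ A) : Prop :=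
  ∀ ⦃M : C⦄ (m : M ⟶ A), Mono m →
    (∃ r' : X ⟶ M, r' ≫ m = r) → (∃ s' : Y ⟶ M, s' ≫ m = s) → IsIso m

/-- A point `(f, s)` over `B` is strong: for every `g : X ⟶ B`, the second
projection of the pullback of `f` along `g` together with `s` is a jointly
strongly epimorphic pair. -/
def IsStrongPoint [HasPullbacks C] {A B : C} (f : A ⟶ B) (s : B ⟶ A) : Prop :=
  ∀ ⦃X : C⦄ (g : X ⟶ B), JointlyStronglyEpi (pullback.snd g f) s

/-- A point `(f, s)` over `B` is stably strong: every pullback of it along a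
morphism `g : X ⟶ B` is a strong point. -/
def IsStablyStrongPoint [HasPullbacks C] {A B : C} (f : A ⟶ B) (s : B ⟶ A)
    (hs : s ≫ f = 𝟙 B) : Prop :=
  ∀ ⦃X : C⦄ (g : X ⟶ B),
    IsStrongPoint (pullback.fst g f)
      (pullback.lift (𝟙 X) (g ≫ s) (by simp [hs]))

/-- An object `Y` is a Mal'tsev object: for every pullback of split
epimorphisms over `Y`, the two induced sections are jointly strongly
epimorphic. -/
def IsMaltsevObject [HasPullbacks C] (Y : C) : Prop :=
  ∀ ⦃A X : C⦄ (f : A ⟶ Y) (s : Y ⟶ A) (g : X ⟶ Y) (t : Y ⟶ X)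
    (hs : s ≫ f = 𝟙 Y) (ht : t ≫ g = 𝟙 Y),
    JointlyStronglyEpi
      (pullback.lift (𝟙 A) (f ≫ t) (by simp [ht]) : A ⟶ pullback f g)
      (pullback.lift (g ≫ s) (𝟙 X) (by simp [hs]) : X ⟶ pullback f g)

/-- An object `Y` is protomodular: every point over `Y` is stably strong. -/
def IsProtomodularObject [HasPullbacks C] (Y : C) : Prop :=
  ∀ ⦃A : C⦄ (f : A ⟶ Y) (s : Y ⟶ A) (hs : s ≫ f = 𝟙 Y), IsStablyStrongPoint f s hs

/-- `f` is a regular epimorphism. -/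
def IsRegularEpi' {X Y : C} (f : X ⟶ Y) : Prop := Nonempty (RegularEpi f)

/-- A commutative square `f' ≫ β = α ≫ f` of regular epimorphisms is a regular
pushout if the comparison morphism into the pullback of `β` and `f` is a
regular epimorphism. -/
def IsRegularPushout [HasPullbacks C] {A' A B' B : C}
    (α : A' ⟶ A) (f' : A' ⟶ B') (f : A ⟶ B) (β : B' ⟶ B)
    (w : f' ≫ β = α ≫ f) : Prop :=
  IsRegularEpi' α ∧ IsRegularEpi' β ∧ IsRegularEpi' f' ∧ IsRegularEpi' f ∧
    IsRegularEpi' (pullback.lift f' α w)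

/-- `Y` is a strongly unital object. -/
def StronglyUnitalObject [HasPullbacks C] [HasBinaryProducts C] (Y : C) : Prop :=
  IsStablyStrongPoint (prod.fst : Y ⨯ Y ⟶ Y) (prod.lift (𝟙 Y) (𝟙 Y)) (prod.lift_fst _ _)

/-- `Y` is a unital object. -/
def UnitalObject [HasPullbacks C] [HasBinaryProducts C] [HasZeroMorphisms C]
    (Y : C) : Prop :=
  IsStablyStrongPoint (prod.fst : Y ⨯ Y ⟶ Y) (prod.lift (𝟙 Y) 0) (prod.lift_fst _ _)

/-- `Y` is a subtractive object: for every split right punctual span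
`(s, f, g, t)` over `Y`, the composite `ker(g) ≫ f` is a regular epimorphism. -/
def SubtractiveObject [HasZeroMorphisms C] [HasKernels C] (Y : C) : Prop :=
  ∀ ⦃X Z : C⦄ (s : X ⟶ Z) (f : Z ⟶ X) (g : Z ⟶ Y) (t : Y ⟶ Z),
    s ≫ f = 𝟙 X → t ≫ g = 𝟙 Y → t ≫ f = 0 →
    IsRegularEpi' (kernel.ι g ≫ f)

/-- In a pointed finitely complete category, a point `(f, s)` is strong iff the
pair `(ker f, s)` is jointly strongly epimorphic. -/
theorem statement3 [HasFiniteLimits C] [HasZeroObject C] [HasZeroMorphisms C]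
    {A B : C} (f : A ⟶ B) (s : B ⟶ A) (hs : s ≫ f = 𝟙 B) :
    IsStrongPoint f s ↔ JointlyStronglyEpi (kernel.ι f) s := by
  constructor
  · intro h M m hm ⟨k', hk'⟩ hsfac
    refine h (0 : (0 : C) ⟶ B) m hm ?_ hsfac
    have h0 : pullback.snd (0 : (0 : C) ⟶ B) f ≫ f = 0 := by
      rw [← pullback.condition]
      simp
    exact ⟨kernel.lift f _ h0 ≫ k', by simp [Category.assoc, hk']⟩
  · intro h X g M m hm ⟨r', hr'⟩ hsfac
    refine h m hm ?_ hsfac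
    have h0 : (0 : kernel f ⟶ X) ≫ g = kernel.ι f ≫ f := by simp
    exact ⟨pullback.lift 0 (kernel.ι f) h0 ≫ r',
      by rw [Category.assoc, hr', pullback.lift_snd]⟩
end

section
/- In a pointed finitely complete category, if (f : A → B, s : B → A) is a strong point, then f is a normal epimorphism, i.e. f is the cokernel of its kernel ker(f) : Ker(f) → A. -/
open CategoryTheory CategoryTheory.Limits
open ZeroObject

universe v u

variable {C : Type u} [Category.{v} C]

/-- In a pointed finitely complete category, if `(f, s)` is a strong point then
`f` is a normal epimorphism, i.e. `f` is the cokernel of its kernel. -/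
theorem statement4 [HasFiniteLimits C] [HasZeroObject C] [HasZeroMorphisms C]
    {A B : C} (f : A ⟶ B) (s : B ⟶ A) (hs : s ≫ f = 𝟙 B)
    (h : IsStrongPoint f s) :
    Nonempty (IsColimit (CokernelCofork.ofπ f (kernel.condition f))) := by
  have key : ∀ {Q : C} (u : A ⟶ Q), kernel.ι f ≫ u = 0 → f ≫ s ≫ u = u := by
    intro Q u hu
    set m := equalizer.ι u (f ≫ s ≫ u) with hm
    have hsnd0 : pullback.snd (0 : (0 : C) ⟶ B) f ≫ f = 0 := by
      rw [← pullback.condition]; simp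
    have hiso : IsIso m := by
      refine h (0 : (0 : C) ⟶ B) m inferInstance ?_ ?_
      · refine ⟨equalizer.lift (pullback.snd _ _) ?_, equalizer.lift_ι _ _⟩
        have : kernel.lift f _ hsnd0 ≫ kernel.ι f = pullback.snd (0 : (0 : C) ⟶ B) f :=
          kernel.lift_ι _ _ _
        rw [← this, Category.assoc, hu, comp_zero, ← Category.assoc, Category.assoc,
          kernel.lift_ι, reassoc_of% hsnd0, zero_comp]
      · refine ⟨equalizer.lift s ?_, equalizer.lift_ι _ _⟩
        rw [← Category.assoc, hs, Category.id_comp]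
    exact ((cancel_epi m).1 (equalizer.condition u (f ≫ s ≫ u))).symm
  refine ⟨CokernelCofork.IsColimit.ofπ f (kernel.condition f)
    (fun u hu => s ≫ u) (fun u hu => key u hu) ?_⟩
  intro Q u hu v hv
  haveI : Epi f := ⟨fun a b hab => by
    have := congrArg (fun x => s ≫ x) hab
    simpa [reassoc_of% hs] using this⟩
  exact (cancel_epi f).1 (by rw [hv, key u hu])
end
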